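/- Laplacian comparison: Let G be a locally finite weighted graph, x₀ ∈ V, and suppose κ(x₀,y) ≥ K for all y ≠ x₀. Then Δd(x₀,·)(y) ≤ Deg(x₀) − K·d(x₀,y) for all y ∈ V. -/

import Mathlib

open scoped BigOperators

/-- A locally finite weighted graph. -/
structure WeightedGraph (V : Type) where
  w : V → V → ℝ
  m : V → ℝ
  symm : ∀ x y, w x y = w y x
  loopless : ∀ x, w x x = 0
  nonneg : ∀ x y, 0 ≤ w x y
  mpos : ∀ x, 0 < m x
  locFin : ∀ x, Set.Finite {y | w x y ≠ 0}

namespace WeightedGraph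

variable {V : Type} (G : WeightedGraph V)

/-- The underlying simple graph. -/
def toSimple : SimpleGraph V where
  Adj x y := x ≠ y ∧ G.w x y ≠ 0
  symm := by
    constructor
    intro x y h
    exact ⟨h.1.symm, by rw [G.symm y x]; exact h.2⟩
  loopless := by constructor; intro x h; exact h.1 rfl

/-- The combinatorial graph distance. -/
noncomputable def dist (x y : V) : ℕ := G.toSimple.dist x y

/-- The graph Laplacian. -/
noncomputable def lap (f : V → ℝ) (x : V) : ℝ :=
  (∑ᶠ y, G.w x y * (f y - f x)) / G.m x

/-- The weighted vertex degree. -/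
noncomputable def deg (x : V) : ℝ := (∑ᶠ y, G.w x y) / G.m x

/-- `f` is `1`-Lipschitz with respect to the combinatorial distance. -/
def Lip1 (f : V → ℝ) : Prop := ∀ x y, |f x - f y| ≤ (G.dist x y : ℝ)

/-- The Ollivier curvature, via the limit-free formula
`κ(x,y) = inf {∇_{xy} Δ f : f ∈ Lip(1) ∩ C_c(V), ∇_{yx} f = 1}`. -/
noncomputable def curv (x y : V) : ℝ :=
  sInf { c | ∃ f : V → ℝ, G.Lip1 f ∧ (Function.support f).Finite ∧
    f y - f x = (G.dist x y : ℝ) ∧ c = (G.lap f x - G.lap f y) / (G.dist x y : ℝ) }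

-- auxiliary lemmas

lemma adj_of_w_ne {x z : V} (h : G.w x z ≠ 0) : G.toSimple.Adj x z :=
  ⟨fun he => h (he ▸ G.loopless x), h⟩

lemma dist_adj {x z : V} (h : G.w x z ≠ 0) : G.dist x z = 1 :=
  SimpleGraph.dist_eq_one_iff_adj.mpr (G.adj_of_w_ne h)

lemma walkBall_finite : ∀ (n : ℕ) (x : V),
    {z | ∃ p : G.toSimple.Walk x z, p.length ≤ n}.Finite := by
  intro n
  induction n with
  | zero =>
    intro x
    apply Set.Finite.subset (Set.finite_singleton x)
    rintro z ⟨p, hp⟩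
    have h0 : p.length = 0 := Nat.le_zero.mp hp
    exact (SimpleGraph.Walk.eq_of_length_eq_zero h0) ▸ rfl
  | succ n ih =>
    intro x
    have hfin : {u | G.w x u ≠ 0}.Finite := G.locFin x
    apply Set.Finite.subset ((hfin.biUnion (fun u _ => ih u)).union (Set.finite_singleton x))
    rintro z ⟨p, hp⟩
    cases p with
    | nil => right; simp
    | @cons _ u _ h q =>
      left
      exact Set.mem_biUnion h.2 ⟨q, Nat.le_of_succ_le_succ hp⟩

lemma ball_finite (hconn : G.toSimple.Connected) (x : V) (n : ℕ) :
    {z | G.dist x z ≤ n}.Finite := by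
  apply Set.Finite.subset (G.walkBall_finite n x)
  intro z hz
  obtain ⟨p, hp⟩ := (hconn x z).exists_walk_length_eq_dist
  exact ⟨p, hp ▸ hz⟩

lemma lap_eq_sum (f : V → ℝ) (x : V) :
    G.lap f x = (∑ z ∈ (G.locFin x).toFinset, G.w x z * (f z - f x)) / G.m x := by
  unfold lap
  congr 1
  apply finsum_eq_finset_sum_of_support_subset
  intro z hz
  simp only [Function.mem_support] at hz
  simp only [Set.Finite.coe_toFinset, Set.mem_setOf_eq]
  intro h0
  exact hz (by rw [h0, zero_mul])

lemma deg_eq_sum (x : V) :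
    G.deg x = (∑ z ∈ (G.locFin x).toFinset, G.w x z) / G.m x := by
  unfold deg
  congr 1
  apply finsum_eq_finset_sum_of_support_subset
  intro z hz
  simpa using hz

lemma lap_congr (f g : V → ℝ) (x : V) (hx : f x = g x)
    (h : ∀ z, G.w x z ≠ 0 → f z = g z) : G.lap f x = G.lap g x := by
  rw [lap_eq_sum, lap_eq_sum]
  congr 1
  apply Finset.sum_congr rfl
  intro z hz
  rw [Set.Finite.mem_toFinset] at hz
  rw [h z hz, hx]

lemma dist_comm' (x y : V) : G.dist x y = G.dist y x := SimpleGraph.dist_comm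

lemma abs_sub_le_one {f : V → ℝ} (hf : G.Lip1 f) {x z : V} (hz : G.w x z ≠ 0) :
    |f z - f x| ≤ 1 := by
  have := hf z x
  rwa [G.dist_comm' z x, G.dist_adj hz, Nat.cast_one] at this

lemma lap_le_deg {f : V → ℝ} (hf : G.Lip1 f) (x : V) : G.lap f x ≤ G.deg x := by
  rw [lap_eq_sum, deg_eq_sum]
  apply div_le_div_of_nonneg_right _ (G.mpos x).le
  apply Finset.sum_le_sum
  intro z hz
  rw [Set.Finite.mem_toFinset] at hz
  calc G.w x z * (f z - f x) ≤ G.w x z * 1 := by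
        apply mul_le_mul_of_nonneg_left _ (G.nonneg x z)
        exact le_trans (le_abs_self _) (G.abs_sub_le_one hf hz)
    _ = G.w x z := mul_one _

lemma neg_deg_le_lap {f : V → ℝ} (hf : G.Lip1 f) (x : V) : -G.deg x ≤ G.lap f x := by
  rw [lap_eq_sum, deg_eq_sum, ← neg_div]
  apply div_le_div_of_nonneg_right _ (G.mpos x).le
  rw [← Finset.sum_neg_distrib]
  apply Finset.sum_le_sum
  intro z hz
  rw [Set.Finite.mem_toFinset] at hz
  calc -G.w x z = G.w x z * (-1) := by ring
    _ ≤ G.w x z * (f z - f x) := by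
        apply mul_le_mul_of_nonneg_left _ (G.nonneg x z)
        exact neg_le_of_abs_le (G.abs_sub_le_one hf hz)

lemma dist_self' (x : V) : G.dist x x = 0 := SimpleGraph.dist_self

lemma dist_triangle' (hconn : G.toSimple.Connected) (x y z : V) :
    G.dist x z ≤ G.dist x y + G.dist y z := hconn.dist_triangle

lemma distFun_lip (hconn : G.toSimple.Connected) (x₀ : V) :
    G.Lip1 (fun z => (G.dist x₀ z : ℝ)) := by
  intro a b
  rw [abs_sub_le_iff]
  constructor
  · have h := G.dist_triangle' hconn x₀ b a
    rw [G.dist_comm' b a] at h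
    have := (Nat.cast_le (α := ℝ)).mpr h
    push_cast at this ⊢
    linarith
  · have h := G.dist_triangle' hconn x₀ a b
    have := (Nat.cast_le (α := ℝ)).mpr h
    push_cast at this ⊢
    linarith

lemma lap_dist_center (x₀ : V) :
    G.lap (fun z => (G.dist x₀ z : ℝ)) x₀ = G.deg x₀ := by
  rw [lap_eq_sum, deg_eq_sum]
  congr 1
  apply Finset.sum_congr rfl
  intro z hz
  rw [Set.Finite.mem_toFinset] at hz
  rw [G.dist_adj hz, G.dist_self' x₀]
  norm_num

lemma curv_set_bddBelow (hconn : G.toSimple.Connected) (x₀ y : V) :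
    BddBelow { c | ∃ f : V → ℝ, G.Lip1 f ∧ (Function.support f).Finite ∧
      f y - f x₀ = (G.dist x₀ y : ℝ) ∧ c = (G.lap f x₀ - G.lap f y) / (G.dist x₀ y : ℝ) } := by
  refine ⟨(-G.deg x₀ - G.deg y) / (G.dist x₀ y : ℝ), ?_⟩
  rintro c ⟨f, hf, -, -, rfl⟩
  apply div_le_div_of_nonneg_right _ (Nat.cast_nonneg _)
  have h1 := G.neg_deg_le_lap hf x₀
  have h2 := G.lap_le_deg hf y
  linarith

theorem lap_comparison (hconn : G.toSimple.Connected)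
    (x₀ : V) (K : ℝ) (hK : ∀ y, y ≠ x₀ → K ≤ G.curv x₀ y) :
    ∀ y, G.lap (fun z => (G.dist x₀ z : ℝ)) y ≤ G.deg x₀ - K * (G.dist x₀ y : ℝ) := by
  intro y
  by_cases hy : y = x₀
  · subst hy
    rw [G.lap_dist_center y, G.dist_self' y]
    norm_num
  -- main case
  set d : ℕ := G.dist x₀ y with hd_def
  have hd : 0 < d := hconn.pos_dist_of_ne (Ne.symm hy)
  have hdR : (0 : ℝ) < (d : ℝ) := by exact_mod_cast hd
  set R : ℕ := d + 1 with hR_def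
  set D : V → ℝ := fun z => (G.dist x₀ z : ℝ) with hD_def
  set f : V → ℝ := fun z => max 0 (min (D z) (2 * (R : ℝ) - D z)) with hf_def
  have hDlip : G.Lip1 D := G.distFun_lip hconn x₀
  have hDnn : ∀ z, 0 ≤ D z := fun z => Nat.cast_nonneg _
  have hagree : ∀ z, G.dist x₀ z ≤ R → f z = D z := by
    intro z hz
    have hzR : D z ≤ (R : ℝ) := by simp only [hD_def]; exact_mod_cast hz
    have : min (D z) (2 * (R : ℝ) - D z) = D z := min_eq_left (by linarith)
    rw [hf_def]
    simp only [this]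
    exact max_eq_right (hDnn z)
  have hfx₀ : f x₀ = 0 := by
    rw [hagree x₀ (by rw [G.dist_self' x₀]; omega), hD_def]
    simp [G.dist_self' x₀]
  have hfy : f y = (d : ℝ) := hagree y (by omega)
  have hflip : G.Lip1 f := by
    intro a b
    calc |f a - f b| ≤ max |(0:ℝ) - 0| |min (D a) (2 * (R:ℝ) - D a) - min (D b) (2 * (R:ℝ) - D b)| :=
          abs_max_sub_max_le_max _ _ _ _
      _ = |min (D a) (2 * (R:ℝ) - D a) - min (D b) (2 * (R:ℝ) - D b)| := by
          rw [sub_zero, abs_zero]; exact max_eq_right (abs_nonneg _)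
      _ ≤ max |D a - D b| |(2 * (R:ℝ) - D a) - (2 * (R:ℝ) - D b)| := abs_min_sub_min_le_max _ _ _ _
      _ = |D a - D b| := by
          rw [show (2 * (R:ℝ) - D a) - (2 * (R:ℝ) - D b) = -(D a - D b) by ring, abs_neg, max_self]
      _ ≤ (G.dist a b : ℝ) := hDlip a b
  have hsupp : (Function.support f).Finite := by
    apply Set.Finite.subset (G.ball_finite hconn x₀ (2 * R))
    intro z hz
    simp only [Function.mem_support] at hz
    by_contra hzd
    simp only [Set.mem_setOf_eq, not_le] at hzd
    have : (2 * (R:ℝ)) ≤ D z := by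
      rw [hD_def]
      push_cast
      exact_mod_cast Nat.cast_le.mpr hzd.le
    apply hz
    rw [hf_def]
    simp only
    have : min (D z) (2 * (R:ℝ) - D z) ≤ 0 := le_trans (min_le_right _ _) (by linarith)
    rw [max_eq_left this]
  have hmem : (G.lap f x₀ - G.lap f y) / (d : ℝ) ∈
      { c | ∃ g : V → ℝ, G.Lip1 g ∧ (Function.support g).Finite ∧
        g y - g x₀ = (G.dist x₀ y : ℝ) ∧ c = (G.lap g x₀ - G.lap g y) / (G.dist x₀ y : ℝ) } := by
    exact ⟨f, hflip, hsupp, by rw [hfy, hfx₀, sub_zero], rfl⟩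
  have hKc : K ≤ (G.lap f x₀ - G.lap f y) / (d : ℝ) :=
    le_trans (hK y hy) (csInf_le (G.curv_set_bddBelow hconn x₀ y) hmem)
  have hlx₀ : G.lap f x₀ = G.deg x₀ := by
    rw [← G.lap_dist_center x₀]
    apply G.lap_congr
    · exact hfx₀.trans (by simp [hD_def, G.dist_self' x₀])
    · intro z hz
      rw [hagree z (by rw [G.dist_adj hz]; omega)]
  have hly : G.lap f y = G.lap D y := by
    apply G.lap_congr
    · exact hfy
    · intro z hz
      apply hagree
      calc G.dist x₀ z ≤ G.dist x₀ y + G.dist y z := G.dist_triangle' hconn x₀ y z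
        _ = d + 1 := by rw [G.dist_adj hz]
  rw [hlx₀, hly] at hKc
  have := (le_div_iff₀ hdR).mp hKc
  rw [hD_def] at this
  linarith

end WeightedGraph

/-- Laplacian comparison: if `κ(x₀,y) ≥ K` for all `y ≠ x₀`, then
`Δ d(x₀,·) ≤ Deg(x₀) - K d(x₀,·)`. -/
theorem stmt12 {V : Type} [Countable V] (G : WeightedGraph V)
    (hconn : G.toSimple.Connected)
    (x₀ : V) (K : ℝ) (hK : ∀ y, y ≠ x₀ → K ≤ G.curv x₀ y) :
    ∀ y, G.lap (fun z => (G.dist x₀ z : ℝ)) y ≤ G.deg x₀ - K * (G.dist x₀ y : ℝ) :=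
  G.lap_comparison hconn x₀ K hK
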